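/- Let φ : X → Y be a continuously differentiable mapping between Banach spaces, A a closed subset of Y, and x̄ ∈ φ⁻¹(A). Suppose A has the Shapiro first order contact property at φ(x̄) and φ is metrically regular around x̄. Then φ⁻¹(A) has the Shapiro first order contact property at x̄. -/

import Mathlib

open Filter Metric Set Pointwise Topology
open scoped ENNReal

noncomputable section

/-- The Bouligand (contingent) tangent cone of `A` at `u`. -/
def bouligand {X : Type*} [NormedAddCommGroup X] [NormedSpace ℝ X] (A : Set X) (u : X) :
    Set X :=
  {v | ∃ (vs : ℕ → X) (ts : ℕ → ℝ),
    Tendsto vs atTop (𝓝 v) ∧ Tendsto ts atTop (𝓝 0) ∧ (∀ n, 0 < ts n) ∧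
    ∀ n, u + ts n • vs n ∈ A}

/-- The Shapiro first order contact property of `A` at `a`. -/
def shapiro {X : Type*} [NormedAddCommGroup X] [NormedSpace ℝ X] (A : Set X) (a : X) : Prop :=
  ∀ ε > 0, ∃ δ > 0, ∀ x ∈ A ∩ ball a δ, ∀ u ∈ A ∩ ball a δ,
    infDist (x - u) (bouligand A u) ≤ ε * ‖x - u‖

/-- The lower Hadamard directional derivative of `φ` at `x` in direction `h`. -/
def hadamardDeriv {X : Type*} [NormedAddCommGroup X] [NormedSpace ℝ X]
    (φ : X → EReal) (x h : X) : EReal :=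
  liminf (fun p : ℝ × X => (((1 : ℝ) / p.1 : ℝ) : EReal) * (φ (x + p.1 • p.2) - φ x))
    ((𝓝[>] (0 : ℝ)) ×ˢ 𝓝 h)

/-- The epigraph of an `EReal`-valued function, as a subset of `X × ℝ`. -/
def epigraph {X : Type*} (φ : X → EReal) : Set (X × ℝ) := {p | φ p.1 ≤ (p.2 : EReal)}

/-- The Hausdorff-Pompeiu excess of `C` beyond `D`. -/
def excess {X : Type*} [PseudoEMetricSpace X] (C D : Set X) : ℝ≥0∞ :=
  ⨆ c ∈ C, EMetric.infEdist c D

/-- Metric regularity of `φ` around `xbar` (for `φ xbar`). -/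
def metReg {X Y : Type*} [NormedAddCommGroup X] [NormedAddCommGroup Y]
    (φ : X → Y) (xbar : X) : Prop :=
  ∃ κ > (0 : ℝ), ∃ U ∈ 𝓝 xbar, ∃ V ∈ 𝓝 (φ xbar), ∀ x ∈ U, ∀ y ∈ V,
    EMetric.infEdist x (φ ⁻¹' {y}) ≤ ENNReal.ofReal (κ * ‖φ x - y‖)
lemma zero_mem_bouligand {X : Type*} [NormedAddCommGroup X] [NormedSpace ℝ X]
    {A : Set X} {a : X} (ha : a ∈ A) : (0:X) ∈ bouligand A a :=
  ⟨fun _ => 0, fun n => 1/(n+1), tendsto_const_nhds,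
    tendsto_one_div_add_atTop_nhds_zero_nat, fun n => by positivity,
    fun n => by simpa using ha⟩


lemma iter_surj {X Y : Type*} [NormedAddCommGroup X] [NormedSpace ℝ X] [CompleteSpace X]
    [NormedAddCommGroup Y] [NormedSpace ℝ Y]
    (g : X →L[ℝ] Y) (C : ℝ) (hC : 0 ≤ C)
    (h : ∀ y : Y, ∃ x, ‖x‖ ≤ C * ‖y‖ ∧ ‖g x - y‖ ≤ ‖y‖ / 2) :
    ∀ y : Y, ∃ x, g x = y ∧ ‖x‖ ≤ 2 * C * ‖y‖ := by
  intro y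
  choose F hF1 hF2 using h
  set r : ℕ → Y := fun k => Nat.rec y (fun _ p => p - g (F p)) k with hr
  have hr0 : r 0 = y := rfl
  have hrs : ∀ k, r (k+1) = r k - g (F (r k)) := fun k => rfl
  have hrb : ∀ k, ‖r k‖ ≤ ‖y‖ * (1/2) ^ k := by
    intro k; induction k with
    | zero => simp [hr0]
    | succ k ih =>
      rw [hrs]
      calc ‖r k - g (F (r k))‖ = ‖g (F (r k)) - r k‖ := by rw [norm_sub_rev]
      _ ≤ ‖r k‖ / 2 := hF2 _
      _ ≤ ‖y‖ * (1/2) ^ k / 2 := by linarith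
      _ = ‖y‖ * (1/2) ^ (k+1) := by ring
  have hFb : ∀ k, ‖F (r k)‖ ≤ C * ‖y‖ * (1/2) ^ k := by
    intro k
    calc ‖F (r k)‖ ≤ C * ‖r k‖ := hF1 _
    _ ≤ C * (‖y‖ * (1/2) ^ k) := mul_le_mul_of_nonneg_left (hrb k) hC
    _ = C * ‖y‖ * (1/2)^k := by ring
  have hgsum : Summable (fun k : ℕ => C * ‖y‖ * (1/2) ^ k) :=
    summable_geometric_two.mul_left _
  have hsum : Summable (fun k => F (r k)) := Summable.of_norm_bounded hgsum hFb
  have hto : Tendsto r atTop (𝓝 0) :=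
    squeeze_zero_norm hrb (by
      simpa using (tendsto_pow_atTop_nhds_zero_of_lt_one (by norm_num : (0:ℝ) ≤ 1/2)
        (by norm_num : (1:ℝ)/2 < 1)).const_mul ‖y‖)
  refine ⟨∑' k, F (r k), ?_, ?_⟩
  · rw [g.map_tsum hsum]
    have hrw : ∀ k, g (F (r k)) = r k - r (k+1) := fun k => by rw [hrs]; abel
    have hs : Summable (fun k => r k - r (k+1)) := by
      exact Summable.congr (hsum.map g g.continuous) hrw
    have h1 : Tendsto (fun n => ∑ k ∈ Finset.range n, (r k - r (k+1))) atTop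
        (𝓝 (∑' k, (r k - r (k+1)))) := hs.hasSum.tendsto_sum_nat
    have h2 : Tendsto (fun n => ∑ k ∈ Finset.range n, (r k - r (k+1))) atTop (𝓝 y) := by
      have h3 : Tendsto (fun n : ℕ => r 0 - r n) atTop (𝓝 (r 0 - 0)) :=
        tendsto_const_nhds.sub hto
      rw [sub_zero, hr0] at h3
      simpa only [Finset.sum_range_sub' r, hr0] using h3
    rw [tsum_congr hrw]
    exact tendsto_nhds_unique h1 h2
  · have hns : Summable (fun k => ‖F (r k)‖) :=
      Summable.of_nonneg_of_le (fun k => norm_nonneg _) hFb hgsum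
    calc ‖∑' k, F (r k)‖ ≤ ∑' k, ‖F (r k)‖ := norm_tsum_le_tsum_norm hns
    _ ≤ ∑' k, (C * ‖y‖ * (1/2)^k) := Summable.tsum_le_tsum hFb hns hgsum
    _ = C * ‖y‖ * 2 := by rw [tsum_mul_left, tsum_geometric_two]
    _ = 2 * C * ‖y‖ := by ring

lemma approx_preimage {X Y : Type*} [NormedAddCommGroup X] [NormedSpace ℝ X]
    [NormedAddCommGroup Y] [NormedSpace ℝ Y]
    {φ : X → Y} {xbar : X} {D : X →L[ℝ] Y} (hd : HasFDerivAt φ D xbar)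
    {κ : ℝ} (hκ : 0 < κ) {U : Set X} (hU : U ∈ 𝓝 xbar) {V : Set Y} (hV : V ∈ 𝓝 (φ xbar))
    (hreg : ∀ x ∈ U, ∀ y ∈ V, EMetric.infEdist x (φ ⁻¹' {y}) ≤ ENNReal.ofReal (κ * ‖φ x - y‖))
    {ε : ℝ} (hε : 0 < ε) (y : Y) :
    ∃ x, ‖x‖ ≤ 2 * κ * ‖y‖ ∧ ‖D x - y‖ ≤ ε * ‖y‖ := by
  rcases eq_or_ne y 0 with rfl | hy
  · exact ⟨0, by simp, by simp⟩
  have hyn : 0 < ‖y‖ := norm_pos_iff.mpr hy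
  set c := ε / (2*κ) with hcdef
  have hc : 0 < c := by positivity
  have hlo := hd.isLittleO.def hc
  rw [Metric.eventually_nhds_iff] at hlo
  obtain ⟨ρ, hρ, hball⟩ := hlo
  obtain ⟨rV, hrV, hbV⟩ := Metric.mem_nhds_iff.mp hV
  set t := min (rV / (2*‖y‖)) (ρ / (4*κ*‖y‖)) with htdef
  have ht : 0 < t := lt_min (by positivity) (by positivity)
  have ht1 : t * ‖y‖ < rV := by
    have h1 : t ≤ rV / (2*‖y‖) := min_le_left _ _
    have h2 := mul_le_mul_of_nonneg_right h1 (le_of_lt hyn)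
    have h3 : rV / (2*‖y‖) * ‖y‖ = rV / 2 := by field_simp
    linarith
  have ht2 : 2 * κ * t * ‖y‖ < ρ := by
    have h1 : t ≤ ρ / (4*κ*‖y‖) := min_le_right _ _
    have h2 := mul_le_mul_of_nonneg_right h1 (by positivity : (0:ℝ) ≤ 2 * κ * ‖y‖)
    have h3 : ρ / (4*κ*‖y‖) * (2*κ*‖y‖) = ρ / 2 := by field_simp; ring
    nlinarith
  set yt := φ xbar + t • y with hytdef
  have hytV : yt ∈ V := hbV (by
    simp only [mem_ball, hytdef, dist_eq_norm]
    rw [show φ xbar + t • y - φ xbar = t • y by abel]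
    rw [norm_smul, Real.norm_eq_abs, abs_of_pos ht]
    exact ht1)
  have hnorm : ‖φ xbar - yt‖ = t * ‖y‖ := by
    rw [show φ xbar - yt = -(t • y) by rw [hytdef]; abel, norm_neg, norm_smul,
      Real.norm_eq_abs, abs_of_pos ht]
  have hlt : EMetric.infEdist xbar (φ ⁻¹' {yt}) < ENNReal.ofReal (2 * κ * t * ‖y‖) := by
    refine lt_of_le_of_lt (hreg xbar (mem_of_mem_nhds hU) yt hytV) ?_
    rw [hnorm, ENNReal.ofReal_lt_ofReal_iff (by positivity)]
    nlinarith [mul_pos (mul_pos hκ ht) hyn]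
  obtain ⟨x', hx'mem, hx'd⟩ := EMetric.infEdist_lt_iff.mp hlt
  rw [edist_lt_ofReal, dist_comm, dist_eq_norm] at hx'd
  have hφx' : φ x' = yt := hx'mem
  refine ⟨t⁻¹ • (x' - xbar), ?_, ?_⟩
  · rw [norm_smul, Real.norm_eq_abs, abs_of_pos (inv_pos.mpr ht)]
    rw [inv_mul_le_iff₀ ht]
    exact le_of_lt (lt_of_lt_of_le hx'd (le_of_eq (by ring)))
  · have key : D (t⁻¹ • (x' - xbar)) - y
        = -(t⁻¹ • (φ x' - φ xbar - D (x' - xbar))) := by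
      rw [map_smul, hφx', hytdef,
        show φ xbar + t • y - φ xbar - D (x' - xbar) = t • y - D (x' - xbar) from by abel,
        smul_sub, inv_smul_smul₀ (ne_of_gt ht)]
      abel
    rw [key, norm_neg, norm_smul, Real.norm_eq_abs, abs_of_pos (inv_pos.mpr ht)]
    have hb := hball (show dist x' xbar < ρ by rw [dist_eq_norm]; linarith)
    have hfin : t⁻¹ * (c * (2 * κ * t * ‖y‖)) = ε * ‖y‖ := by
      rw [hcdef]; field_simp
    calc t⁻¹ * ‖φ x' - φ xbar - D (x' - xbar)‖ ≤ t⁻¹ * (c * ‖x' - xbar‖) := by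
          exact mul_le_mul_of_nonneg_left hb (le_of_lt (inv_pos.mpr ht))
    _ ≤ t⁻¹ * (c * (2 * κ * t * ‖y‖)) := by
          exact mul_le_mul_of_nonneg_left
            (mul_le_mul_of_nonneg_left (le_of_lt hx'd) (le_of_lt hc))
            (le_of_lt (inv_pos.mpr ht))
    _ = ε * ‖y‖ := hfin

lemma mem_bouligand_preimage {X Y : Type*} [NormedAddCommGroup X] [NormedSpace ℝ X]
    [NormedAddCommGroup Y] [NormedSpace ℝ Y]
    {φ : X → Y} {u : X} {D : X →L[ℝ] Y} (hd : HasFDerivAt φ D u) {A : Set Y}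
    {κ : ℝ} (hκ : 0 < κ) {U : Set X} (hU : U ∈ 𝓝 u) {V : Set Y} (hV : V ∈ 𝓝 (φ u))
    (hreg : ∀ x ∈ U, ∀ y ∈ V, EMetric.infEdist x (φ ⁻¹' {y}) ≤ ENNReal.ofReal (κ * ‖φ x - y‖))
    {z : Y} (hz : z ∈ bouligand A (φ u)) {v : X} (hv : D v = z) :
    v ∈ bouligand (φ ⁻¹' A) u := by
  obtain ⟨zs, ts, hzs, hts, htpos, hmem⟩ := hz
  -- eventually in U and V
  have htend0 : Tendsto (fun n => u + ts n • v) atTop (𝓝 u) := by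
    have h1 : Tendsto (fun n => ts n • v) atTop (𝓝 ((0:ℝ) • v)) := hts.smul_const v
    rw [zero_smul] at h1
    simpa using tendsto_const_nhds.add h1
  have hVt : Tendsto (fun n => φ u + ts n • zs n) atTop (𝓝 (φ u)) := by
    have h1 : Tendsto (fun n => ts n • zs n) atTop (𝓝 ((0:ℝ) • z)) := hts.smul hzs
    rw [zero_smul] at h1
    simpa using tendsto_const_nhds.add h1
  obtain ⟨N, hN⟩ := eventually_atTop.mp
    ((htend0.eventually_mem hU).and (hVt.eventually_mem hV))
  set Ts : ℕ → ℝ := fun n => ts (n + N) with hTsdef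
  set Zs : ℕ → Y := fun n => zs (n + N) with hZsdef
  have hTs : Tendsto Ts atTop (𝓝 0) := hts.comp (tendsto_add_atTop_nat N)
  have hZs : Tendsto Zs atTop (𝓝 z) := hzs.comp (tendsto_add_atTop_nat N)
  have hTpos : ∀ n, 0 < Ts n := fun n => htpos _
  have hTmem : ∀ n, φ u + Ts n • Zs n ∈ A := fun n => hmem _
  have hUV : ∀ n, u + Ts n • v ∈ U ∧ φ u + Ts n • Zs n ∈ V := fun n =>
    hN (n + N) (Nat.le_add_left N n)
  set e : ℕ → Y := fun n => φ (u + Ts n • v) - φ u - D (Ts n • v) with hedef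
  have htendTs : Tendsto (fun n => u + Ts n • v) atTop (𝓝 u) := by
    have h1 : Tendsto (fun n => Ts n • v) atTop (𝓝 ((0:ℝ) • v)) := hTs.smul_const v
    rw [zero_smul] at h1
    simpa using tendsto_const_nhds.add h1
  have hlo : ∀ c : ℝ, 0 < c → ∀ᶠ n in atTop, ‖e n‖ ≤ c * (Ts n * ‖v‖) := by
    intro c hc
    filter_upwards [htendTs.eventually (hd.isLittleO.def hc)] with n hn
    simp only [add_sub_cancel_left] at hn
    calc ‖e n‖ ≤ c * ‖Ts n • v‖ := hn
    _ = c * (Ts n * ‖v‖) := by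
        rw [norm_smul, Real.norm_eq_abs, abs_of_pos (hTpos n)]
  -- choose approximate projections
  have hex : ∀ n, ∃ x', φ x' = φ u + Ts n • Zs n ∧
      ‖(u + Ts n • v) - x'‖ < κ * ‖φ (u + Ts n • v) - (φ u + Ts n • Zs n)‖ + Ts n / (n+1) := by
    intro n
    set a := κ * ‖φ (u + Ts n • v) - (φ u + Ts n • Zs n)‖ with hadef
    have ha : 0 ≤ a := mul_nonneg hκ.le (norm_nonneg _)
    have hpos : 0 < Ts n / (n+1) := div_pos (hTpos n) (by positivity)
    have hlt : EMetric.infEdist (u + Ts n • v) (φ ⁻¹' {φ u + Ts n • Zs n})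
        < ENNReal.ofReal (a + Ts n / (n+1)) := by
      refine lt_of_le_of_lt (hreg _ (hUV n).1 _ (hUV n).2) ?_
      rw [ENNReal.ofReal_lt_ofReal_iff (by linarith)]
      linarith
    obtain ⟨x', hx'mem, hx'd⟩ := EMetric.infEdist_lt_iff.mp hlt
    rw [edist_lt_ofReal, dist_eq_norm] at hx'd
    exact ⟨x', hx'mem, hx'd⟩
  choose xs hxs1 hxs2 using hex
  set vs : ℕ → X := fun n => (Ts n)⁻¹ • (xs n - u) with hvsdef
  have hxseq : ∀ n, u + Ts n • vs n = xs n := by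
    intro n
    simp only [hvsdef, smul_inv_smul₀ (hTpos n).ne']
    abel
  -- the error bound
  have hkey : ∀ n, ‖vs n - v‖ ≤ κ * ((Ts n)⁻¹ * ‖e n‖) + κ * ‖z - Zs n‖ + 1/(n+1) := by
    intro n
    have hne := (hTpos n).ne'
    have hid : vs n - v = -((Ts n)⁻¹ • ((u + Ts n • v) - xs n)) := by
      simp only [hvsdef]
      rw [show (u + Ts n • v) - xs n = (u - xs n) + Ts n • v by abel, smul_add,
        inv_smul_smul₀ hne, smul_sub]
      module
    have hphi : φ (u + Ts n • v) - (φ u + Ts n • Zs n) = e n + Ts n • (z - Zs n) := by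
      simp only [hedef, map_smul, hv, smul_sub]
      abel
    have hnb : ‖φ (u + Ts n • v) - (φ u + Ts n • Zs n)‖ ≤ ‖e n‖ + Ts n * ‖z - Zs n‖ := by
      rw [hphi]
      refine (norm_add_le _ _).trans ?_
      rw [norm_smul, Real.norm_eq_abs, abs_of_pos (hTpos n)]
    have h1 : ‖vs n - v‖ ≤ (Ts n)⁻¹ * (κ * (‖e n‖ + Ts n * ‖z - Zs n‖) + Ts n/(n+1)) := by
      rw [hid, norm_neg, norm_smul, Real.norm_eq_abs, abs_of_pos (inv_pos.mpr (hTpos n))]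
      refine mul_le_mul_of_nonneg_left ?_ (inv_pos.mpr (hTpos n)).le
      refine (hxs2 n).le.trans ?_
      have := mul_le_mul_of_nonneg_left (hnb) hκ.le
      linarith
    refine h1.trans (le_of_eq ?_)
    have hTT : (Ts n)⁻¹ * Ts n = 1 := inv_mul_cancel₀ hne
    calc (Ts n)⁻¹ * (κ * (‖e n‖ + Ts n * ‖z - Zs n‖) + Ts n / (n+1))
        = κ * ((Ts n)⁻¹ * ‖e n‖) + ((Ts n)⁻¹ * Ts n) * (κ * ‖z - Zs n‖)
          + ((Ts n)⁻¹ * Ts n) * (1/((n:ℝ)+1)) := by ring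
      _ = κ * ((Ts n)⁻¹ * ‖e n‖) + κ * ‖z - Zs n‖ + 1/((n:ℝ)+1) := by rw [hTT]; ring
  -- convergence of vs
  have hEto : Tendsto (fun n => (Ts n)⁻¹ * ‖e n‖) atTop (𝓝 0) := by
    rw [NormedAddCommGroup.tendsto_nhds_zero]
    intro ε hε
    have hc : 0 < ε / (2*(‖v‖+1)) := by positivity
    filter_upwards [hlo _ hc] with n hn
    rw [Real.norm_eq_abs,
      abs_of_nonneg (mul_nonneg (inv_pos.mpr (hTpos n)).le (norm_nonneg _))]
    have h2 : (Ts n)⁻¹ * ‖e n‖ ≤ (Ts n)⁻¹ * (ε / (2*(‖v‖+1)) * (Ts n * ‖v‖)) :=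
      mul_le_mul_of_nonneg_left hn (inv_pos.mpr (hTpos n)).le
    have hTT : (Ts n)⁻¹ * Ts n = 1 := inv_mul_cancel₀ (hTpos n).ne'
    have h3 : (Ts n)⁻¹ * (ε / (2*(‖v‖+1)) * (Ts n * ‖v‖))
        = ε / (2*(‖v‖+1)) * ‖v‖ := by
      calc (Ts n)⁻¹ * (ε / (2*(‖v‖+1)) * (Ts n * ‖v‖))
          = ((Ts n)⁻¹ * Ts n) * (ε / (2*(‖v‖+1)) * ‖v‖) := by ring
        _ = ε / (2*(‖v‖+1)) * ‖v‖ := by rw [hTT]; ring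
    have h4 : ε / (2*(‖v‖+1)) * ‖v‖ < ε := by
      rw [div_mul_eq_mul_div, div_lt_iff₀ (by positivity)]
      nlinarith [norm_nonneg v]
    linarith
  have hZto : Tendsto (fun n => κ * ‖z - Zs n‖) atTop (𝓝 0) := by
    have h1 : Tendsto (fun n => z - Zs n) atTop (𝓝 (z - z)) :=
      tendsto_const_nhds.sub hZs
    rw [sub_self] at h1
    have h2 := h1.norm
    rw [norm_zero] at h2
    simpa using h2.const_mul κ
  have hgto : Tendsto (fun n => κ * ((Ts n)⁻¹ * ‖e n‖) + κ * ‖z - Zs n‖ + 1/((n:ℝ)+1))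
      atTop (𝓝 0) := by
    have := ((hEto.const_mul κ).add hZto).add tendsto_one_div_add_atTop_nhds_zero_nat
    simpa using this
  have hvs : Tendsto vs atTop (𝓝 v) := by
    rw [tendsto_iff_norm_sub_tendsto_zero]
    exact squeeze_zero (fun n => norm_nonneg _) hkey hgto
  exact ⟨vs, Ts, hvs, hTs, hTpos, fun n => by
    rw [mem_preimage, hxseq n, hxs1 n]; exact hTmem n⟩

set_option maxHeartbeats 1000000 in
theorem shapiro_preimage_of_metReg {X Y : Type*}
    [NormedAddCommGroup X] [NormedSpace ℝ X] [CompleteSpace X]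
    [NormedAddCommGroup Y] [NormedSpace ℝ Y] [CompleteSpace Y]
    (φ : X → Y) (hφ : ContDiff ℝ 1 φ)
    (A : Set Y) (hAcl : IsClosed A)
    (xbar : X) (hxbar : xbar ∈ φ ⁻¹' A)
    (hA : shapiro A (φ xbar)) (hmr : metReg φ xbar) :
    shapiro (φ ⁻¹' A) xbar := by
  classical
  obtain ⟨κ, hκ, U, hU, V, hV, hreg⟩ := hmr
  have hdiff : ∀ x : X, HasFDerivAt φ (fderiv ℝ φ x) x := fun x =>
    (hφ.differentiable one_ne_zero x).hasFDerivAt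
  have hDc : Continuous (fderiv ℝ φ) := hφ.continuous_fderiv one_ne_zero
  have hφc : Continuous φ := hφ.continuous
  set D := fderiv ℝ φ with hDdef
  -- exact surjectivity of D xbar with constant C₀
  have happrox : ∀ y : Y, ∃ x, ‖x‖ ≤ 2*κ*‖y‖ ∧ ‖D xbar x - y‖ ≤ ‖y‖/2 := by
    intro y
    obtain ⟨x, h1, h2⟩ := approx_preimage (hdiff xbar) hκ hU hV hreg
      (by norm_num : (0:ℝ) < 1/2) y
    exact ⟨x, h1, by linarith⟩
  have hsurj0 := iter_surj (D xbar) (2*κ) (by positivity) happrox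
  set C₀ : ℝ := 2 * (2*κ) with hC₀
  have hC₀pos : 0 < C₀ := by positivity
  set C₁ : ℝ := 2 * C₀ with hC₁
  have hC₁pos : 0 < C₁ := by positivity
  set L : ℝ := ‖D xbar‖ + 1 with hL
  have hLpos : 0 < L := by positivity
  intro ε hε
  set εA : ℝ := ε / (4 * C₁ * L) with hεA
  have hεA0 : 0 < εA := by positivity
  set ε₁ : ℝ := ε / (2 * C₁) with hε₁
  have hε₁0 : 0 < ε₁ := by positivity
  obtain ⟨δA, hδA, hA'⟩ := hA εA hεA0
  obtain ⟨rU, hrU, hbU⟩ := Metric.mem_nhds_iff.mp hU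
  obtain ⟨rV, hrV, hbV⟩ := Metric.mem_nhds_iff.mp hV
  set m : ℝ := min (min (ε₁/2) (1/(2*C₀))) 1 with hm
  have hmpos : 0 < m := by
    refine lt_min (lt_min (by positivity) (by positivity)) one_pos
  -- continuity of D at xbar
  have hDcont : ∀ᶠ w in 𝓝 xbar, ‖D w - D xbar‖ < m := by
    have := hDc.continuousAt (x := xbar)
    rw [Metric.continuousAt_iff] at this
    obtain ⟨δ', hδ', h'⟩ := this m hmpos
    rw [Metric.eventually_nhds_iff]
    exact ⟨δ', hδ', fun w hw => by
      have := h' hw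
      rwa [dist_eq_norm] at this⟩
  rw [Metric.eventually_nhds_iff] at hDcont
  obtain ⟨δD, hδD, hDD⟩ := hDcont
  -- continuity of φ at xbar
  have hφcont : ∀ᶠ w in 𝓝 xbar, φ w ∈ ball (φ xbar) (min δA (rV/2)) := by
    have : ball (φ xbar) (min δA (rV/2)) ∈ 𝓝 (φ xbar) :=
      ball_mem_nhds _ (lt_min hδA (by positivity))
    exact hφc.continuousAt.eventually_mem this
  rw [Metric.eventually_nhds_iff] at hφcont
  obtain ⟨δc, hδc, hφc'⟩ := hφcont
  set δ : ℝ := min (min δD δc) (rU/2) with hδ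
  have hδpos : 0 < δ := lt_min (lt_min hδD hδc) (by positivity)
  refine ⟨δ, hδpos, ?_⟩
  rintro x ⟨hxA, hxb⟩ u ⟨huA, hub⟩
  rw [mem_ball, dist_eq_norm] at hxb hub
  have hxδD : ‖x - xbar‖ < δD := lt_of_lt_of_le hxb (hδ ▸ (min_le_left _ _).trans (min_le_left _ _))
  have huδD : ‖u - xbar‖ < δD := lt_of_lt_of_le hub (hδ ▸ (min_le_left _ _).trans (min_le_left _ _))
  have hxδc : ‖x - xbar‖ < δc := lt_of_lt_of_le hxb (hδ ▸ (min_le_left _ _).trans (min_le_right _ _))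
  have huδc : ‖u - xbar‖ < δc := lt_of_lt_of_le hub (hδ ▸ (min_le_left _ _).trans (min_le_right _ _))
  have huδU : ‖u - xbar‖ < rU/2 := lt_of_lt_of_le hub (hδ ▸ min_le_right _ _)
  -- U is a neighborhood of u
  have hUu : U ∈ 𝓝 u := by
    refine Filter.mem_of_superset (ball_mem_nhds u (by positivity : (0:ℝ) < rU/2)) ?_
    intro w hw
    refine hbU ?_
    rw [mem_ball] at hw ⊢
    calc dist w xbar ≤ dist w u + dist u xbar := dist_triangle _ _ _
    _ < rU/2 + rU/2 := by
        rw [dist_eq_norm u xbar]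
        exact add_lt_add hw huδU
    _ = rU := by ring
  -- V is a neighborhood of φ u
  have hφuV : dist (φ u) (φ xbar) < min δA (rV/2) := by
    have := hφc' (show dist u xbar < δc by rwa [dist_eq_norm])
    rwa [mem_ball] at this
  have hVu : V ∈ 𝓝 (φ u) := by
    refine Filter.mem_of_superset (ball_mem_nhds (φ u) (by positivity : (0:ℝ) < rV/2)) ?_
    intro w hw
    refine hbV ?_
    rw [mem_ball] at hw ⊢
    calc dist w (φ xbar) ≤ dist w (φ u) + dist (φ u) (φ xbar) := dist_triangle _ _ _
    _ < rV/2 + rV/2 := add_lt_add hw (lt_of_lt_of_le hφuV (min_le_right _ _))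
    _ = rV := by ring
  -- surjectivity of D u with constant C₁
  have hDu : ‖D u - D xbar‖ < m := hDD (show dist u xbar < δD by rwa [dist_eq_norm])
  have hDx : ‖D x - D xbar‖ < m := hDD (show dist x xbar < δD by rwa [dist_eq_norm])
  have hsurju : ∀ y : Y, ∃ w, D u w = y ∧ ‖w‖ ≤ C₁ * ‖y‖ := by
    have h := iter_surj (D u) C₀ hC₀pos.le ?_
    · intro y; obtain ⟨w, h1, h2⟩ := h y; exact ⟨w, h1, by rw [hC₁]; linarith⟩
    intro y
    obtain ⟨w, hw1, hw2⟩ := hsurj0 y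
    refine ⟨w, by rw [hC₀] at hw2 ⊢; linarith, ?_⟩
    have : D u w - y = (D u - D xbar) w := by
      rw [ContinuousLinearMap.sub_apply, hw1]
    rw [this]
    calc ‖(D u - D xbar) w‖ ≤ ‖D u - D xbar‖ * ‖w‖ := (D u - D xbar).le_opNorm w
    _ ≤ (1/(2*C₀)) * (C₀ * ‖y‖) := by
        refine mul_le_mul (le_of_lt (lt_of_lt_of_le hDu ?_)) hw2 (norm_nonneg _) (by positivity)
        exact (min_le_left _ _).trans (min_le_right _ _)
    _ = ‖y‖/2 := by field_simp
  -- mean value estimates on the ball around xbar of radius δD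
  have hball_conv : Convex ℝ (ball xbar δD) := convex_ball _ _
  have hxmem : x ∈ ball xbar δD := by rw [mem_ball, dist_eq_norm]; exact hxδD
  have humem : u ∈ ball xbar δD := by rw [mem_ball, dist_eq_norm]; exact huδD
  have hmv : ‖φ x - φ u - D u (x - u)‖ ≤ ε₁ * ‖x - u‖ := by
    have key := Convex.norm_image_sub_le_of_norm_hasFDerivWithin_le
      (f := fun w => φ w - D u w) (f' := fun w => D w - D u) (s := ball xbar δD)
      (x := u) (y := x) (C := ε₁)
      (fun w hw => ((hdiff w).sub ((D u).hasFDerivAt)).hasFDerivWithinAt)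
      (fun w hw => by
        have h1 : ‖D w - D xbar‖ < m := hDD (mem_ball.mp hw)
        have h2 : ‖D w - D u‖ ≤ ‖D w - D xbar‖ + ‖D xbar - D u‖ := by
          simpa using norm_add_le (D w - D xbar) (D xbar - D u)
        have h3 : ‖D xbar - D u‖ = ‖D u - D xbar‖ := norm_sub_rev _ _
        have hm1 : m ≤ ε₁/2 := (min_le_left _ _).trans (min_le_left _ _)
        linarith)
      hball_conv humem hxmem
    have : (fun w => φ w - D u w) x - (fun w => φ w - D u w) u
        = φ x - φ u - D u (x - u) := by
      simp only [map_sub]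
      abel
    rwa [this] at key
  have hLip : ‖φ x - φ u‖ ≤ L * ‖x - u‖ := by
    refine Convex.norm_image_sub_le_of_norm_hasFDerivWithin_le
      (f := φ) (f' := D) (s := ball xbar δD)
      (fun w hw => (hdiff w).hasFDerivWithinAt)
      (fun w hw => by
        have h1 : ‖D w - D xbar‖ < m := hDD (mem_ball.mp hw)
        have h2 : ‖D w‖ ≤ ‖D w - D xbar‖ + ‖D xbar‖ := by
          simpa using norm_add_le (D w - D xbar) (D xbar)
        have hm1 : m ≤ 1 := min_le_right _ _
        rw [hL]
        linarith)
      hball_conv humem hxmem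
  -- pick z in the Bouligand cone of A at φ u
  have hφuA : φ u ∈ A := huA
  have hφxA : φ x ∈ A := hxA
  have hTAne : (bouligand A (φ u)).Nonempty := ⟨0, zero_mem_bouligand hφuA⟩
  have hAest : infDist (φ x - φ u) (bouligand A (φ u)) ≤ εA * ‖φ x - φ u‖ := by
    refine hA' (φ x) ⟨hφxA, ?_⟩ (φ u) ⟨hφuA, ?_⟩
    · have := hφc' (show dist x xbar < δc by rwa [dist_eq_norm])
      rw [mem_ball] at this ⊢
      exact lt_of_lt_of_le this (min_le_left _ _)
    · rw [mem_ball]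
      exact lt_of_lt_of_le hφuV (min_le_left _ _)
  have hzex : ∃ z ∈ bouligand A (φ u), ‖(φ x - φ u) - z‖ ≤ 2 * εA * ‖φ x - φ u‖ := by
    by_cases hw : φ x = φ u
    · exact ⟨0, zero_mem_bouligand hφuA, by simp [hw]⟩
    · have hwn : 0 < ‖φ x - φ u‖ := by
        rw [norm_pos_iff, sub_ne_zero]; exact hw
      have hlt : infDist (φ x - φ u) (bouligand A (φ u)) < 2 * εA * ‖φ x - φ u‖ := by
        refine lt_of_le_of_lt hAest ?_
        nlinarith
      obtain ⟨z, hz1, hz2⟩ := (infDist_lt_iff hTAne).mp hlt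
      rw [dist_eq_norm] at hz2
      exact ⟨z, hz1, hz2.le⟩
  obtain ⟨z, hzT, hzb⟩ := hzex
  -- solve D u d = z - D u (x - u)
  obtain ⟨d, hd1, hd2⟩ := hsurju (z - D u (x - u))
  set v : X := (x - u) + d with hv
  have hDuv : D u v = z := by
    rw [hv, (D u).map_add, hd1]
    abel
  have hvmem : v ∈ bouligand (φ ⁻¹' A) u :=
    mem_bouligand_preimage (hdiff u) hκ hUu hVu hreg hzT hDuv
  -- final estimate
  have hfinal : infDist (x - u) (bouligand (φ ⁻¹' A) u) ≤ ‖d‖ := by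
    have := infDist_le_dist_of_mem (x := x - u) hvmem
    rwa [dist_eq_norm, show x - u - v = -d by rw [hv]; abel, norm_neg] at this
  refine hfinal.trans ?_
  have htri : ‖z - D u (x - u)‖ ≤ ‖(φ x - φ u) - z‖ + ‖φ x - φ u - D u (x - u)‖ := by
    have : z - D u (x - u) = -((φ x - φ u) - z) + (φ x - φ u - D u (x - u)) := by abel
    rw [this]
    exact (norm_add_le _ _).trans (by rw [norm_neg])
  have hbound : ‖d‖ ≤ C₁ * (2 * εA * ‖φ x - φ u‖ + ε₁ * ‖x - u‖) := by
    refine hd2.trans ?_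
    exact mul_le_mul_of_nonneg_left (htri.trans (add_le_add hzb hmv)) hC₁pos.le
  have hw2 : 2 * εA * ‖φ x - φ u‖ ≤ 2 * εA * (L * ‖x - u‖) :=
    mul_le_mul_of_nonneg_left hLip (by positivity)
  have hcomp : C₁ * (2 * εA * (L * ‖x - u‖) + ε₁ * ‖x - u‖) = ε * ‖x - u‖ := by
    rw [hεA, hε₁]
    field_simp
    ring
  calc ‖d‖ ≤ C₁ * (2 * εA * ‖φ x - φ u‖ + ε₁ * ‖x - u‖) := hbound
  _ ≤ C₁ * (2 * εA * (L * ‖x - u‖) + ε₁ * ‖x - u‖) := by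
      refine mul_le_mul_of_nonneg_left (add_le_add hw2 le_rfl) hC₁pos.le
  _ = ε * ‖x - u‖ := hcomp
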